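/- For a density matrix ρ and 0 ≤ δ ≤ 1, the minimal significant-subspace dimension is achieved by the top eigenvalues: 𝒮(ρ,δ) equals the least natural number m such that the sum of the m largest eigenvalues of ρ (counted with multiplicity) is at least δ. Equivalently, for every natural number m, the maximum of Tr(Πρ) over orthogonal projection matrices Π of rank m equals the sum of the m largest eigenvalues of ρ. -/

import Mathlib

open scoped BigOperators Classical ComplexOrder

/-- A density matrix: positive semidefinite with trace one. -/
def IsDensity {ι : Type*} [Fintype ι] [DecidableEq ι] (ρ : Matrix ι ι ℂ) : Prop :=
  ρ.PosSemidef ∧ ρ.trace = 1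

/-- The trace distance `D(ρ,σ) = Tr|ρ−σ|`: the sum of the absolute values of the
eigenvalues of the Hermitian matrix `ρ − σ` (no factor 1/2). -/
noncomputable def traceDist {ι : Type*} [Fintype ι] [DecidableEq ι]
    (ρ σ : Matrix ι ι ℂ) : ℝ :=
  if h : (ρ - σ).IsHermitian then ∑ i, |h.eigenvalues i| else 0

/-- The minimal dimension `𝒮(ρ,δ)` of a `δ`-significant subspace: the minimum rank of an
orthogonal projection `P` (`P = Pᴴ = P²`) with `Tr(Pρ) ≥ δ`. -/
noncomputable def sigDim {ι : Type*} [Fintype ι] [DecidableEq ι]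
    (ρ : Matrix ι ι ℂ) (δ : ℝ) : ℕ :=
  sInf {m : ℕ | ∃ P : Matrix ι ι ℂ,
    P.IsHermitian ∧ P * P = P ∧ δ ≤ ((P * ρ).trace).re ∧ P.rank = m}

/-- The `n`-fold Kronecker power of `ρ`, indexed by `Fin n → ι`. -/
noncomputable def kronPow {ι : Type*} (ρ : Matrix ι ι ℂ) (n : ℕ) :
    Matrix (Fin n → ι) (Fin n → ι) ℂ :=
  Matrix.of fun i j => ∏ k, ρ (i k) (j k)

/-- The rank-one matrix `|u⟩⟨u|`. -/
noncomputable def outer {ι : Type*} (u : ι → ℂ) : Matrix ι ι ℂ :=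
  Matrix.of fun i j => u i * starRingEnd ℂ (u j)

/-- The partial trace over the second subsystem. -/
noncomputable def ptraceB {A B : Type*} [Fintype B]
    (M : Matrix (A × B) (A × B) ℂ) : Matrix A A ℂ :=
  Matrix.of fun a a' => ∑ b, M (a, b) (a', b)

/-- The sum of the `m` largest values of `p` (counted with multiplicity), expressed as the
supremum of `∑ i ∈ s, p i` over subsets `s` of cardinality `m`. -/
noncomputable def topSum {ι : Type*} [Fintype ι] (p : ι → ℝ) (m : ℕ) : ℝ :=
  sSup {x : ℝ | ∃ s : Finset ι, s.card = m ∧ x = ∑ i ∈ s, p i}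

set_option linter.unusedSectionVars false

section SigAux
open Matrix
variable {ι : Type*} [Fintype ι] [DecidableEq ι]

lemma exists_topset (p : ι → ℝ) : ∀ m : ℕ, m ≤ Fintype.card ι →
    ∃ s : Finset ι, s.card = m ∧ ∀ i ∈ s, ∀ j ∉ s, p j ≤ p i := by
  intro m
  induction m with
  | zero => exact fun _ => ⟨∅, rfl, by simp⟩
  | succ m ih =>
    intro hm
    obtain ⟨s, hcard, hs⟩ := ih (le_of_lt hm)
    have hne : (sᶜ : Finset ι).Nonempty := by
      rw [← Finset.card_pos, Finset.card_compl, hcard]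
      omega
    obtain ⟨j₀, hj₀mem, hj₀max⟩ := Finset.exists_max_image sᶜ p hne
    have hj₀s : j₀ ∉ s := Finset.mem_compl.mp hj₀mem
    refine ⟨insert j₀ s, by rw [Finset.card_insert_of_notMem hj₀s, hcard], ?_⟩
    intro i hi j hj
    have hjs : j ∉ s := fun h => hj (Finset.mem_insert_of_mem h)
    have hjc : p j ≤ p j₀ := hj₀max j (Finset.mem_compl.mpr hjs)
    rcases Finset.mem_insert.mp hi with rfl | hi
    · exact hjc
    · exact hs i hi j hjs

lemma key_ineq (p q : ι → ℝ) (s : Finset ι)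
    (hs : ∀ i ∈ s, ∀ j ∉ s, p j ≤ p i)
    (hq0 : ∀ i, 0 ≤ q i) (hq1 : ∀ i, q i ≤ 1)
    (hsum : ∑ i, q i = s.card) :
    ∑ i, q i * p i ≤ ∑ i ∈ s, p i := by
  rcases (sᶜ : Finset ι).eq_empty_or_nonempty with hc | hc
  · have hsu : s = Finset.univ := by rwa [Finset.compl_eq_empty_iff] at hc
    subst hsu
    have hq : ∀ i ∈ (Finset.univ : Finset ι), q i = 1 := by
      by_contra hcon
      push_neg at hcon
      obtain ⟨i₀, _, hi₀⟩ := hcon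
      have hlt : ∑ i, q i < ∑ i : ι, (1 : ℝ) :=
        Finset.sum_lt_sum (fun i _ => hq1 i) ⟨i₀, Finset.mem_univ _, lt_of_le_of_ne (hq1 i₀) hi₀⟩
      simp only [Finset.sum_const, Finset.card_univ, nsmul_eq_mul, mul_one] at hlt
      rw [hsum, Finset.card_univ] at hlt
      exact absurd hlt (lt_irrefl _)
    exact le_of_eq (Finset.sum_congr rfl fun i hi => by rw [hq i hi, one_mul])
  · obtain ⟨j₀, hj₀mem, hj₀max⟩ := Finset.exists_max_image sᶜ p hc
    set t := p j₀ with ht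
    have hts : ∀ i ∈ s, t ≤ p i := fun i hi => hs i hi j₀ (Finset.mem_compl.mp hj₀mem)
    have h1 : ∑ i ∈ s, (1 - q i) * t ≤ ∑ i ∈ s, (1 - q i) * p i :=
      Finset.sum_le_sum fun i hi =>
        mul_le_mul_of_nonneg_left (hts i hi) (by linarith [hq1 i])
    have h2 : ∑ j ∈ sᶜ, q j * p j ≤ ∑ j ∈ sᶜ, q j * t :=
      Finset.sum_le_sum fun j hj =>
        mul_le_mul_of_nonneg_left (hj₀max j hj) (hq0 j)
    have hsplit : ∑ i ∈ s, q i * p i + ∑ i ∈ sᶜ, q i * p i = ∑ i, q i * p i :=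
      Finset.sum_add_sum_compl s _
    have hsplitq : ∑ i ∈ s, q i + ∑ i ∈ sᶜ, q i = ∑ i, q i :=
      Finset.sum_add_sum_compl s _
    have e1 : ∑ i ∈ s, (1 - q i) * p i = ∑ i ∈ s, p i - ∑ i ∈ s, q i * p i := by
      rw [← Finset.sum_sub_distrib]
      exact Finset.sum_congr rfl fun i _ => by ring
    have e2 : ∑ i ∈ s, (1 - q i) * t = (s.card : ℝ) * t - (∑ i ∈ s, q i) * t := by
      simp only [sub_mul, one_mul]
      rw [Finset.sum_sub_distrib, Finset.sum_const, ← Finset.sum_mul]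
      simp [nsmul_eq_mul]
    have e3 : ∑ j ∈ sᶜ, q j * t = (∑ j ∈ sᶜ, q j) * t := (Finset.sum_mul _ _ _).symm
    have hA : ∑ i ∈ sᶜ, q i = (s.card : ℝ) - ∑ i ∈ s, q i := by linarith
    have e4 : (∑ j ∈ sᶜ, q j) * t = (s.card : ℝ) * t - (∑ i ∈ s, q i) * t := by
      rw [hA]; ring
    linarith
end SigAux

section MatAux
open Matrix
variable {ι : Type*} [Fintype ι] [DecidableEq ι]

lemma conj_mul_conj (U A B : Matrix ι ι ℂ) (hU : star U * U = 1) :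
    (U * A * star U) * (U * B * star U) = U * (A * B) * star U := by
  have h1 : star U * (U * B * star U) = B * star U := by
    rw [← mul_assoc, ← mul_assoc, hU, one_mul]
  calc (U * A * star U) * (U * B * star U)
      = (U * A) * (star U * (U * B * star U)) := by simp only [mul_assoc]
    _ = (U * A) * (B * star U) := by rw [h1]
    _ = U * (A * B) * star U := by simp only [mul_assoc]

lemma trace_conj (U A : Matrix ι ι ℂ) (hU : star U * U = 1) :
    (U * A * star U).trace = A.trace := by
  rw [Matrix.trace_mul_cycle, hU, one_mul]

lemma rank_conj (U A : Matrix ι ι ℂ) (hU : star U * U = 1) (hU' : U * star U = 1) :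
    (U * A * star U).rank = A.rank := by
  have hdU : IsUnit U.det := by
    apply IsUnit.of_mul_eq_one (star U).det
    rw [← Matrix.det_mul, hU', Matrix.det_one]
  have hdU' : IsUnit (star U).det := by
    apply IsUnit.of_mul_eq_one U.det
    rw [← Matrix.det_mul, hU, Matrix.det_one]
  rw [Matrix.rank_mul_eq_left_of_isUnit_det (star U) (U * A) hdU',
    Matrix.rank_mul_eq_right_of_isUnit_det U A hdU]

lemma psd_of_proj {P : Matrix ι ι ℂ} (hP : P.IsHermitian) (h2 : P * P = P) :
    P.PosSemidef := by
  have h3 : Pᴴ * P = P := by rw [hP.eq, h2]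
  exact h3 ▸ Matrix.posSemidef_conjTranspose_mul_self P

lemma diag_re_nonneg {M : Matrix ι ι ℂ} (hM : M.PosSemidef) (i : ι) :
    0 ≤ (M i i).re := by
  have := hM.re_dotProduct_nonneg (Pi.single i 1)
  simpa [dotProduct, Matrix.mulVec, Pi.single_apply, Finset.sum_ite_eq,
    Finset.mul_sum, apply_ite] using this

lemma trace_eq_rank_of_proj {Q : Matrix ι ι ℂ} (hQ : Q.IsHermitian) (h2 : Q * Q = Q) :
    Q.trace = (Q.rank : ℂ) := by
  have h01 : ∀ i, hQ.eigenvalues i = 0 ∨ hQ.eigenvalues i = 1 := by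
    intro i
    have hv := hQ.mulVec_eigenvectorBasis i
    have h2v : Q *ᵥ (Q *ᵥ ⇑(hQ.eigenvectorBasis i)) = Q *ᵥ ⇑(hQ.eigenvectorBasis i) := by
      rw [Matrix.mulVec_mulVec, h2]
    rw [hv, Matrix.mulVec_smul, hv, smul_smul] at h2v
    have hvne : (⇑(hQ.eigenvectorBasis i) : ι → ℂ) ≠ 0 := by
      have := hQ.eigenvectorBasis.orthonormal.ne_zero i
      intro hcon
      apply this
      ext j
      exact congrFun hcon j
    have hμ : (hQ.eigenvalues i : ℝ) * hQ.eigenvalues i = hQ.eigenvalues i := by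
      have := h2v
      rw [← sub_eq_zero, ← sub_smul] at this
      rcases smul_eq_zero.mp this with h | h
      · have : (hQ.eigenvalues i : ℝ) * hQ.eigenvalues i - hQ.eigenvalues i = 0 := h
        linarith [this]
      · exact absurd h hvne
    rcases mul_eq_zero.mp (show hQ.eigenvalues i * (hQ.eigenvalues i - 1) = 0 by nlinarith) with h | h
    · left; exact h
    · right; linarith
  set V : Matrix ι ι ℂ := (hQ.eigenvectorUnitary : Matrix ι ι ℂ) with hV
  have hVV : star V * V = 1 := Matrix.mem_unitaryGroup_iff'.mp hQ.eigenvectorUnitary.2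
  have htr : Q.trace = ∑ i, (hQ.eigenvalues i : ℂ) := by
    conv_lhs => rw [hQ.spectral_theorem, Unitary.conjStarAlgAut_apply]
    rw [trace_conj _ _ hVV, Matrix.trace_diagonal]
    simp [Function.comp]
  have hrank : Q.rank = Fintype.card {i // hQ.eigenvalues i ≠ 0} := by
    rw [hQ.rank_eq_rank_diagonal, Matrix.rank_diagonal]
  rw [htr, hrank, Fintype.card_subtype]
  rw [← Finset.sum_filter_of_ne (p := fun i => hQ.eigenvalues i ≠ 0)
    (fun i _ hne h0 => hne (by rw [h0]; simp))]
  rw [show ∑ i ∈ Finset.univ.filter (fun i => hQ.eigenvalues i ≠ 0), (hQ.eigenvalues i : ℂ)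
      = ∑ _i ∈ Finset.univ.filter (fun i => hQ.eigenvalues i ≠ 0), (1 : ℂ) from
    Finset.sum_congr rfl fun i hi => by
      rcases h01 i with h | h
      · exact absurd h (Finset.mem_filter.mp hi).2
      · rw [h]; norm_num]
  simp

lemma sum_eigenvalues_eq_trace {ρ : Matrix ι ι ℂ} (h : ρ.IsHermitian) :
    ρ.trace = ∑ i, (h.eigenvalues i : ℂ) := by
  have hUU : star (h.eigenvectorUnitary : Matrix ι ι ℂ) * (h.eigenvectorUnitary : Matrix ι ι ℂ) = 1 :=
    Matrix.mem_unitaryGroup_iff'.mp h.eigenvectorUnitary.2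
  conv_lhs => rw [h.spectral_theorem, Unitary.conjStarAlgAut_apply]
  rw [trace_conj _ _ hUU, Matrix.trace_diagonal]
  simp [Function.comp]

lemma projOf_spec {ρ : Matrix ι ι ℂ} (h : ρ.IsHermitian) (s : Finset ι) :
    ∃ P : Matrix ι ι ℂ, P.IsHermitian ∧ P * P = P ∧ P.rank = s.card ∧
      (P * ρ).trace = ∑ i ∈ s, (h.eigenvalues i : ℂ) := by
  set U : Matrix ι ι ℂ := (h.eigenvectorUnitary : Matrix ι ι ℂ) with hUdef
  have hUU : star U * U = 1 := Matrix.mem_unitaryGroup_iff'.mp h.eigenvectorUnitary.2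
  have hUU' : U * star U = 1 := Matrix.mem_unitaryGroup_iff.mp h.eigenvectorUnitary.2
  set d : ι → ℂ := fun i => if i ∈ s then 1 else 0 with hd
  have hds : star d = d := funext fun i => by by_cases hi : i ∈ s <;> simp [hd, hi]
  have hdd : d * d = d := funext fun i => by by_cases hi : i ∈ s <;> simp [hd, hi]
  refine ⟨U * Matrix.diagonal d * star U, ?_, ?_, ?_, ?_⟩
  · show (U * Matrix.diagonal d * star U)ᴴ = _
    simp [Matrix.conjTranspose_mul, Matrix.diagonal_conjTranspose, hds,
      Matrix.star_eq_conjTranspose, Matrix.mul_assoc]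
  · rw [conj_mul_conj U _ _ hUU, Matrix.diagonal_mul_diagonal]
    have hdd2 : (fun i => d i * d i) = d := funext fun i => by
      by_cases hi : i ∈ s <;> simp [hd, hi]
    rw [hdd2]
  · rw [rank_conj _ _ hUU hUU', Matrix.rank_diagonal]
    refine Fintype.card_of_subtype s fun i => ?_
    by_cases hi : i ∈ s <;> simp [hd, hi]
  · conv_lhs => rw [h.spectral_theorem, Unitary.conjStarAlgAut_apply]
    rw [conj_mul_conj U _ _ hUU, trace_conj _ _ hUU, Matrix.diagonal_mul_diagonal,
      Matrix.trace_diagonal]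
    simp only [Pi.mul_apply, hd, Function.comp, ite_mul, one_mul, zero_mul]
    rw [Finset.sum_ite_mem, Finset.univ_inter]
    simp

lemma trace_proj_mul_re_le {ρ : Matrix ι ι ℂ} (hρ : ρ.PosSemidef)
    {P : Matrix ι ι ℂ} (hP : P.IsHermitian) (hP2 : P * P = P)
    {s : Finset ι} (hcard : s.card = P.rank)
    (hs : ∀ i ∈ s, ∀ j ∉ s, hρ.1.eigenvalues j ≤ hρ.1.eigenvalues i) :
    ((P * ρ).trace).re ≤ ∑ i ∈ s, hρ.1.eigenvalues i := by
  have h := hρ.1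
  set U : Matrix ι ι ℂ := (h.eigenvectorUnitary : Matrix ι ι ℂ) with hUdef
  have hUU : star U * U = 1 := Matrix.mem_unitaryGroup_iff'.mp h.eigenvectorUnitary.2
  have hUU' : U * star U = 1 := Matrix.mem_unitaryGroup_iff.mp h.eigenvectorUnitary.2
  set Q : Matrix ι ι ℂ := star U * P * U with hQdef
  have hQP : U * Q * star U = P := by
    rw [hQdef]
    rw [show U * (star U * P * U) * star U = (U * star U) * P * (U * star U) from by
      simp only [mul_assoc]]
    rw [hUU', one_mul, mul_one]
  have hQherm : Q.IsHermitian := by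
    show Qᴴ = Q
    rw [hQdef]
    simp [Matrix.conjTranspose_mul, hP.eq, Matrix.star_eq_conjTranspose, Matrix.mul_assoc]
  have hQ2 : Q * Q = Q := by
    have hc := conj_mul_conj (star U) P P (by rwa [star_star])
    rw [star_star] at hc
    rw [hQdef, hc, hP2]
  have hPpsd : P.PosSemidef := psd_of_proj hP hP2
  have hQpsd : Q.PosSemidef := by
    have := hPpsd.conjTranspose_mul_mul_same U
    rwa [← Matrix.star_eq_conjTranspose] at this
  have hQ1herm : (1 - Q).IsHermitian := Matrix.isHermitian_one.sub hQherm
  have hQ12 : (1 - Q) * (1 - Q) = 1 - Q := by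
    have hexp : (1 - Q) * (1 - Q) = 1 - Q - Q + Q * Q := by noncomm_ring
    rw [hexp, hQ2]; abel
  have hQ1psd : (1 - Q).PosSemidef := psd_of_proj hQ1herm hQ12
  have hq0 : ∀ i, 0 ≤ (Q i i).re := fun i => diag_re_nonneg hQpsd i
  have hq1 : ∀ i, (Q i i).re ≤ 1 := by
    intro i
    have h0 := diag_re_nonneg hQ1psd i
    rw [Matrix.sub_apply, Matrix.one_apply_eq, Complex.sub_re, Complex.one_re] at h0
    linarith
  have hQtr : Q.trace = P.trace := by
    rw [hQdef, Matrix.trace_mul_cycle, hUU', one_mul]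
  have hsumq : ∑ i, (Q i i).re = (s.card : ℝ) := by
    have h1 : Q.trace = (P.rank : ℂ) := hQtr.trans (trace_eq_rank_of_proj hP hP2)
    have h2 : (Q.trace).re = ∑ i, (Q i i).re := by
      rw [Matrix.trace]
      simp [Matrix.diag]
    rw [← h2, h1, hcard]
    simp
  have htrPρ : ((P * ρ).trace).re = ∑ i, (Q i i).re * hρ.1.eigenvalues i := by
    have hQD : (Q * Matrix.diagonal ((RCLike.ofReal : ℝ → ℂ) ∘ h.eigenvalues)).trace
        = ∑ i, Q i i * (h.eigenvalues i : ℂ) := by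
      rw [Matrix.trace]
      simp [Matrix.diag, Matrix.mul_diagonal, Function.comp]
    conv_lhs => rw [← hQP, h.spectral_theorem, Unitary.conjStarAlgAut_apply]
    rw [conj_mul_conj U _ _ hUU, trace_conj _ _ hUU, hQD, Complex.re_sum]
    exact Finset.sum_congr rfl fun i _ => by simp [Complex.mul_re]
  rw [htrPρ]
  exact key_ineq hρ.1.eigenvalues (fun i => (Q i i).re) s hs hq0 hq1 hsumq
end MatAux


/-- `𝒮(ρ,δ)` is the least `m` such that the sum of the `m` largest eigenvalues
of `ρ` is at least `δ`; equivalently, for every `m`, the maximum of `Tr(Pρ)` over rank-`m`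
orthogonal projections `P` equals the sum of the `m` largest eigenvalues of `ρ`. -/
theorem sigDim_eq_top_eigenvalues {ι : Type*} [Fintype ι] [DecidableEq ι] [Nonempty ι]
    (ρ : Matrix ι ι ℂ) (hρ : IsDensity ρ) (δ : ℝ) (hδ0 : 0 ≤ δ) (hδ1 : δ ≤ 1) :
    sigDim ρ δ = sInf {m : ℕ | δ ≤ topSum hρ.1.isHermitian.eigenvalues m} ∧
    ∀ m : ℕ,
      sSup {x : ℝ | ∃ P : Matrix ι ι ℂ,
          P.IsHermitian ∧ P * P = P ∧ P.rank = m ∧ x = ((P * ρ).trace).re}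
        = topSum hρ.1.isHermitian.eigenvalues m := by
  classical
  set p : ι → ℝ := hρ.1.isHermitian.eigenvalues with hp
  set n := Fintype.card ι with hn
  have hsum1 : ∑ i, p i = 1 := by
    have h1 := sum_eigenvalues_eq_trace hρ.1.isHermitian
    simp only [hρ.2] at h1
    have h2 := congrArg Complex.re h1.symm
    have h3 : ∑ i, hρ.1.isHermitian.eigenvalues i = 1 := by
      simpa [Complex.re_sum] using h2
    exact h3
  have htop : ∀ (s₀ : Finset ι), (∀ i ∈ s₀, ∀ j ∉ s₀, p j ≤ p i) →
      topSum p s₀.card = ∑ i ∈ s₀, p i := by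
    intro s₀ hmax
    apply IsGreatest.csSup_eq
    constructor
    · exact ⟨s₀, rfl, rfl⟩
    · rintro x ⟨s, hsc, rfl⟩
      have he : ∑ i ∈ s, p i = ∑ i, (if i ∈ s then (1:ℝ) else 0) * p i := by
        simp [ite_mul, Finset.sum_ite_mem]
      rw [he]
      refine key_ineq p _ s₀ hmax (fun i => ?_) (fun i => ?_) ?_
      · by_cases hi : i ∈ s <;> simp [hi]
      · by_cases hi : i ∈ s <;> simp [hi]
      · rw [← hsc]
        simp [Finset.sum_ite_mem]
  have hproj : ∀ (s₀ : Finset ι), (∀ i ∈ s₀, ∀ j ∉ s₀, p j ≤ p i) →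
      IsGreatest {x : ℝ | ∃ P : Matrix ι ι ℂ,
          P.IsHermitian ∧ P * P = P ∧ P.rank = s₀.card ∧ x = ((P * ρ).trace).re}
        (∑ i ∈ s₀, p i) := by
    intro s₀ hmax
    constructor
    · obtain ⟨P, h1, h2, h3, h4⟩ := projOf_spec hρ.1.isHermitian s₀
      refine ⟨P, h1, h2, h3, ?_⟩
      rw [h4, Complex.re_sum]
      simp
      rfl
    · rintro x ⟨P, h1, h2, h3, rfl⟩
      exact trace_proj_mul_re_le hρ.1 h1 h2 h3.symm hmax
  constructor
  · -- part 1
    have hnB : δ ≤ topSum p n := by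
      have hu := htop Finset.univ (fun i _ j hj => absurd (Finset.mem_univ j) hj)
      rw [Finset.card_univ, ← hn] at hu
      rw [hu, hsum1]
      exact hδ1
    have hBne : {m : ℕ | δ ≤ topSum p m}.Nonempty := ⟨n, hnB⟩
    set m₀ := sInf {m : ℕ | δ ≤ topSum p m} with hm₀
    have hm₀B : δ ≤ topSum p m₀ := Nat.sInf_mem hBne
    have hm₀n : m₀ ≤ n := Nat.sInf_le hnB
    obtain ⟨s₀, hs₀c, hmax⟩ := exists_topset p m₀ hm₀n
    have hm₀A : m₀ ∈ {m : ℕ | ∃ P : Matrix ι ι ℂ,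
        P.IsHermitian ∧ P * P = P ∧ δ ≤ ((P * ρ).trace).re ∧ P.rank = m} := by
      obtain ⟨P, h1, h2, h3, h4⟩ := projOf_spec hρ.1.isHermitian s₀
      refine ⟨P, h1, h2, ?_, h3.trans hs₀c⟩
      have : ((P * ρ).trace).re = ∑ i ∈ s₀, p i := by
        rw [h4, Complex.re_sum]; simp; rfl
      rw [this, ← htop s₀ hmax, hs₀c]
      exact hm₀B
    have hAB : {m : ℕ | ∃ P : Matrix ι ι ℂ,
        P.IsHermitian ∧ P * P = P ∧ δ ≤ ((P * ρ).trace).re ∧ P.rank = m} ⊆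
        {m : ℕ | δ ≤ topSum p m} := by
      rintro m ⟨P, h1, h2, h3, h4⟩
      have hmn : m ≤ n := by
        rw [← h4, hn]
        exact Matrix.rank_le_card_width P
      obtain ⟨s₁, hs₁c, hmax₁⟩ := exists_topset p m hmn
      have := trace_proj_mul_re_le hρ.1 h1 h2 (hs₁c.trans h4.symm) hmax₁
      have h5 : δ ≤ ∑ i ∈ s₁, p i := le_trans h3 this
      show δ ≤ topSum p m
      rw [← hs₁c, htop s₁ hmax₁]
      exact h5
    show sInf _ = m₀
    apply le_antisymm
    · exact Nat.sInf_le hm₀A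
    · exact Nat.sInf_le (hAB (Nat.sInf_mem ⟨m₀, hm₀A⟩))
  · -- part 2
    intro m
    by_cases hm : m ≤ n
    · obtain ⟨s₀, hs₀c, hmax⟩ := exists_topset p m hm
      rw [← hs₀c, htop s₀ hmax]
      exact (hproj s₀ hmax).csSup_eq
    · push_neg at hm
      have he1 : {x : ℝ | ∃ P : Matrix ι ι ℂ,
          P.IsHermitian ∧ P * P = P ∧ P.rank = m ∧ x = ((P * ρ).trace).re} = ∅ := by
        ext x
        simp only [Set.mem_setOf_eq, Set.mem_empty_iff_false, iff_false, not_exists]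
        rintro P ⟨_, _, h3, _⟩
        have h5 := Matrix.rank_le_card_width P
        rw [h3] at h5
        have h6 : Fintype.card ι < m := hn ▸ hm
        omega
      have he2 : {x : ℝ | ∃ s : Finset ι, s.card = m ∧ x = ∑ i ∈ s, p i} = ∅ := by
        ext x
        simp only [Set.mem_setOf_eq, Set.mem_empty_iff_false, iff_false, not_exists]
        rintro s ⟨hsc, _⟩
        have h5 := Finset.card_le_univ s
        rw [hsc] at h5
        have h6 : Fintype.card ι < m := hn ▸ hm
        omega
      rw [he1]
      simp only [topSum, hp]
      rw [he2]
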